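/- For each n, the number of ordered m-tuples 1 ≤ i_1 ≤ ... ≤ i_m ≤ n with gap statistic w(i) = w > 0 is at most 2^{s-2} n^{s-1} (w+1)^s, where s = ⌊m/2⌋ + 1 and w(i) = max{j_1,...,j_s} with j_1 = i_2 − i_1, j_l = min{i_{2l} − i_{2l-1}, i_{2l-1} − i_{2l-2}} for l = 2,...,s−1, and j_s = i_m − i_{m-1}. -/

import Mathlib

private def iv (m : ℕ) (i : Fin m → ℕ) : ℕ → ℕ :=
  fun k => if hk : k < m then i ⟨k, hk⟩ else 0

private def enc (m w : ℕ) (i : Fin m → ℕ) : ℕ × ℕ × (Fin (m / 2 - 1) → Bool × ℕ × ℕ) × ℕ :=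
  (iv m i 0, iv m i 1 - iv m i 0,
   fun l =>
     if iv m i (2 * (l : ℕ) + 3) - iv m i (2 * (l : ℕ) + 2) ≤ w then
       (true, iv m i (2 * (l : ℕ) + 2), iv m i (2 * (l : ℕ) + 3) - iv m i (2 * (l : ℕ) + 2))
     else
       (false, iv m i (2 * (l : ℕ) + 3), iv m i (2 * (l : ℕ) + 2) - iv m i (2 * (l : ℕ) + 1)),
   iv m i (m - 1) - iv m i (m - 2))

private lemma iv_mono {m : ℕ} {i : Fin m → ℕ} (mono : ∀ a b : Fin m, a ≤ b → i a ≤ i b)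
    {a b : ℕ} (hab : a ≤ b) (hb : b < m) : iv m i a ≤ iv m i b := by
  have ha : a < m := lt_of_le_of_lt hab hb
  simp only [iv, dif_pos ha, dif_pos hb]
  exact mono ⟨a, ha⟩ ⟨b, hb⟩ hab

private lemma enc_inj {m w : ℕ} (hm : 3 ≤ m) {i i2 : Fin m → ℕ}
    (mono : ∀ a b : Fin m, a ≤ b → i a ≤ i b)
    (mono2 : ∀ a b : Fin m, a ≤ b → i2 a ≤ i2 b)
    (h : enc m w i = enc m w i2) : i = i2 := by
  have h0 : iv m i 0 = iv m i2 0 := by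
    have := congrArg Prod.fst h; simpa [enc] using this
  have h1 : iv m i 1 - iv m i 0 = iv m i2 1 - iv m i2 0 := by
    have := congrArg (fun x => x.2.1) h; simpa [enc] using this
  have hp : ∀ l : Fin (m / 2 - 1),
      (if iv m i (2 * (l : ℕ) + 3) - iv m i (2 * (l : ℕ) + 2) ≤ w then
        (true, iv m i (2 * (l : ℕ) + 2), iv m i (2 * (l : ℕ) + 3) - iv m i (2 * (l : ℕ) + 2))
      else
        (false, iv m i (2 * (l : ℕ) + 3), iv m i (2 * (l : ℕ) + 2) - iv m i (2 * (l : ℕ) + 1)))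
      =
      (if iv m i2 (2 * (l : ℕ) + 3) - iv m i2 (2 * (l : ℕ) + 2) ≤ w then
        (true, iv m i2 (2 * (l : ℕ) + 2), iv m i2 (2 * (l : ℕ) + 3) - iv m i2 (2 * (l : ℕ) + 2))
      else
        (false, iv m i2 (2 * (l : ℕ) + 3), iv m i2 (2 * (l : ℕ) + 2) - iv m i2 (2 * (l : ℕ) + 1))) := by
    intro l
    have := congrArg (fun x => x.2.2.1) h
    simp only [enc] at this
    exact congrFun this l
  have hlast : iv m i (m - 1) - iv m i (m - 2) = iv m i2 (m - 1) - iv m i2 (m - 2) := by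
    have := congrArg (fun x => x.2.2.2) h; simpa [enc] using this
  have key : ∀ l, l ≤ m / 2 - 1 →
      iv m i (2 * l) = iv m i2 (2 * l) ∧ iv m i (2 * l + 1) = iv m i2 (2 * l + 1) := by
    intro l
    induction l with
    | zero =>
      intro _
      have hf : iv m i 0 ≤ iv m i 1 := iv_mono mono (by omega) (by omega)
      have hg : iv m i2 0 ≤ iv m i2 1 := iv_mono mono2 (by omega) (by omega)
      norm_num
      exact ⟨h0, by omega⟩
    | succ l ih =>
      intro hl1
      have hl : l < m / 2 - 1 := by omega
      obtain ⟨k0, k1⟩ := ih (by omega)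
      have hpl := hp ⟨l, hl⟩
      simp only [Fin.val_mk] at hpl
      have m3 : 2 * l + 3 < m := by omega
      have f1 : iv m i (2 * l + 1) ≤ iv m i (2 * l + 2) := iv_mono mono (by omega) (by omega)
      have f2 : iv m i (2 * l + 2) ≤ iv m i (2 * l + 3) := iv_mono mono (by omega) (by omega)
      have g1 : iv m i2 (2 * l + 1) ≤ iv m i2 (2 * l + 2) := iv_mono mono2 (by omega) (by omega)
      have g2 : iv m i2 (2 * l + 2) ≤ iv m i2 (2 * l + 3) := iv_mono mono2 (by omega) (by omega)
      have e1 : 2 * (l + 1) = 2 * l + 2 := by ring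
      have e2 : 2 * (l + 1) + 1 = 2 * l + 3 := by omega
      rw [e2, e1]
      by_cases c1 : iv m i (2 * l + 3) - iv m i (2 * l + 2) ≤ w <;>
        by_cases c2 : iv m i2 (2 * l + 3) - iv m i2 (2 * l + 2) ≤ w
      · rw [if_pos c1, if_pos c2] at hpl
        simp only [Prod.mk.injEq] at hpl
        obtain ⟨-, a1, a2⟩ := hpl
        omega
      · rw [if_pos c1, if_neg c2] at hpl
        simp only [Prod.mk.injEq] at hpl
        exact absurd hpl.1 (by simp)
      · rw [if_neg c1, if_pos c2] at hpl
        simp only [Prod.mk.injEq] at hpl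
        exact absurd hpl.1 (by simp)
      · rw [if_neg c1, if_neg c2] at hpl
        simp only [Prod.mk.injEq] at hpl
        obtain ⟨-, a1, a2⟩ := hpl
        omega
  have all : ∀ k, k < m → iv m i k = iv m i2 k := by
    intro k hk
    by_cases hk2 : k ≤ 2 * (m / 2) - 1
    · obtain ⟨p1, p2⟩ := key (k / 2) (by omega)
      have : k = 2 * (k / 2) ∨ k = 2 * (k / 2) + 1 := by omega
      rcases this with e | e
      · rw [e]; exact p1
      · rw [e]; exact p2
    · -- k = m - 1, m odd
      have e : k = m - 1 := by omega
      have hm2 : m - 2 = 2 * (m / 2 - 1) + 1 := by omega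
      obtain ⟨-, p2⟩ := key (m / 2 - 1) le_rfl
      rw [← hm2] at p2
      have f1 : iv m i (m - 2) ≤ iv m i (m - 1) := iv_mono mono (by omega) (by omega)
      have g1 : iv m i2 (m - 2) ≤ iv m i2 (m - 1) := iv_mono mono2 (by omega) (by omega)
      rw [e]
      omega
  funext a
  have := all a.val a.isLt
  simpa [iv, a.isLt] using this

/-- The number of ordered m-tuples in {1,...,n}^m with gap statistic w(i) = w > 0
is at most 2^{s-2} n^{s-1} (w+1)^s where s = ⌊m/2⌋ + 1. -/
theorem stmt_10 (m n : ℕ) (hm : 3 ≤ m) (hn : 1 ≤ n) (w : ℕ) (hw : 0 < w) :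
    (@Finset.filter (Fin m → ℕ)
      (fun i =>
        (∀ a b : Fin m, a ≤ b → i a ≤ i b) ∧
        ((Finset.Icc 1 (m / 2 + 1)).sup (fun l =>
          let i' : ℕ → ℕ := fun k => if hk : k < m then i ⟨k, hk⟩ else 0
          if l = 1 then i' 1 - i' 0
          else if l = m / 2 + 1 then i' (m - 1) - i' (m - 2)
          else min (i' (2 * l - 1) - i' (2 * l - 2))
                   (i' (2 * l - 2) - i' (2 * l - 3))) = w))
      (fun i => Classical.propDecidable _)
      (Fintype.piFinset fun _ : Fin m => Finset.Icc 1 n)).card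
      ≤ 2 ^ (m / 2 + 1 - 2) * n ^ (m / 2 + 1 - 1) * (w + 1) ^ (m / 2 + 1) := by
  classical
  set T : Finset (ℕ × ℕ × (Fin (m / 2 - 1) → Bool × ℕ × ℕ) × ℕ) :=
    (Finset.Icc 1 n) ×ˢ (Finset.Icc 0 w) ×ˢ
      (Fintype.piFinset fun _ : Fin (m / 2 - 1) =>
        (Finset.univ : Finset Bool) ×ˢ (Finset.Icc 1 n) ×ˢ (Finset.Icc 0 w)) ×ˢ
      (Finset.Icc 0 w) with hT
  have hcard : T.card = 2 ^ (m / 2 + 1 - 2) * n ^ (m / 2 + 1 - 1) * (w + 1) ^ (m / 2 + 1) := by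
    obtain ⟨t, ht⟩ : ∃ t, m / 2 = t + 1 := ⟨m / 2 - 1, by omega⟩
    rw [show m / 2 + 1 - 2 = t from by omega, show m / 2 + 1 - 1 = t + 1 from by omega,
      show m / 2 + 1 = t + 2 from by omega, hT]
    rw [show m / 2 - 1 = t from by omega]
    simp [Finset.card_product, Fintype.card_piFinset, Nat.card_Icc, Finset.prod_const, mul_pow]
    ring
  rw [← hcard]
  apply Finset.card_le_card_of_injOn (enc m w)
  · intro i hi
    obtain ⟨hmem, hmono, hsup⟩ := (@Finset.mem_filter _ _ (fun i => Classical.propDecidable _) _ _).mp hi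
    have hrange : ∀ a : Fin m, i a ∈ Finset.Icc 1 n := Fintype.mem_piFinset.mp hmem
    have hterm : ∀ l ∈ Finset.Icc 1 (m / 2 + 1),
        (if l = 1 then iv m i 1 - iv m i 0
         else if l = m / 2 + 1 then iv m i (m - 1) - iv m i (m - 2)
         else min (iv m i (2 * l - 1) - iv m i (2 * l - 2))
                  (iv m i (2 * l - 2) - iv m i (2 * l - 3))) ≤ w := by
      intro l hl
      have h2 := Finset.le_sup (s := Finset.Icc 1 (m / 2 + 1))
        (f := fun l =>
          let i' : ℕ → ℕ := fun k => if hk : k < m then i ⟨k, hk⟩ else 0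
          if l = 1 then i' 1 - i' 0
          else if l = m / 2 + 1 then i' (m - 1) - i' (m - 2)
          else min (i' (2 * l - 1) - i' (2 * l - 2)) (i' (2 * l - 2) - i' (2 * l - 3))) hl
      rw [hsup] at h2
      exact h2
    have hivr : ∀ k, k < m → iv m i k ∈ Finset.Icc 1 n := by
      intro k hk
      simpa [iv, dif_pos hk] using hrange ⟨k, hk⟩
    clear hi hsup hmem
    have hgap1 : iv m i 1 - iv m i 0 ≤ w := by
      have h2 := hterm 1 (Finset.mem_Icc.mpr ⟨le_rfl, by omega⟩)
      rwa [if_pos rfl] at h2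
    have hgaplast : iv m i (m - 1) - iv m i (m - 2) ≤ w := by
      have h2 := hterm (m / 2 + 1) (Finset.mem_Icc.mpr ⟨by omega, le_rfl⟩)
      rwa [if_neg (by omega), if_pos rfl] at h2
    rw [hT]
    refine Finset.mem_product.mpr ⟨hivr 0 (by omega), Finset.mem_product.mpr ⟨?_,
      Finset.mem_product.mpr ⟨?_, ?_⟩⟩⟩
    · exact Finset.mem_Icc.mpr ⟨Nat.zero_le _, hgap1⟩
    · refine Fintype.mem_piFinset.mpr fun l => ?_
      have hlm : (l : ℕ) < m / 2 - 1 := l.isLt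
      have hl3 : 2 * (l : ℕ) + 3 < m := by omega
      show (if iv m i (2 * (l : ℕ) + 3) - iv m i (2 * (l : ℕ) + 2) ≤ w then
          (true, iv m i (2 * (l : ℕ) + 2), iv m i (2 * (l : ℕ) + 3) - iv m i (2 * (l : ℕ) + 2))
        else
          (false, iv m i (2 * (l : ℕ) + 3), iv m i (2 * (l : ℕ) + 2) - iv m i (2 * (l : ℕ) + 1)))
        ∈ _
      by_cases c : iv m i (2 * (l : ℕ) + 3) - iv m i (2 * (l : ℕ) + 2) ≤ w
      · rw [if_pos c]
        exact Finset.mem_product.mpr ⟨Finset.mem_univ _, Finset.mem_product.mpr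
          ⟨hivr _ (by omega), Finset.mem_Icc.mpr ⟨Nat.zero_le _, c⟩⟩⟩
      · rw [if_neg c]
        have ht2 := hterm ((l : ℕ) + 2) (Finset.mem_Icc.mpr ⟨by omega, by omega⟩)
        rw [if_neg (by omega), if_neg (by omega),
          show 2 * ((l : ℕ) + 2) - 1 = 2 * (l : ℕ) + 3 from by omega,
          show 2 * ((l : ℕ) + 2) - 2 = 2 * (l : ℕ) + 2 from by omega,
          show 2 * ((l : ℕ) + 2) - 3 = 2 * (l : ℕ) + 1 from by omega] at ht2
        refine Finset.mem_product.mpr ⟨Finset.mem_univ _, Finset.mem_product.mpr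
          ⟨hivr _ (by omega), ?_⟩⟩
        show iv m i (2 * (l : ℕ) + 2) - iv m i (2 * (l : ℕ) + 1) ∈ Finset.Icc 0 w
        exact Finset.mem_Icc.mpr ⟨Nat.zero_le _, by omega⟩
    · exact Finset.mem_Icc.mpr ⟨Nat.zero_le _, hgaplast⟩
  · intro i hi i2 hi2 h
    have h1 := (@Finset.mem_filter _ _ (fun i => Classical.propDecidable _) _ _).mp hi
    have h2 := (@Finset.mem_filter _ _ (fun i => Classical.propDecidable _) _ _).mp hi2
    exact enc_inj hm h1.2.1 h2.2.1 h
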